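/- The graph H_{4n+1,4n+4} is (a,d)-distance antimagic if and only if d = 1, with a = 8n² + 10n + 1. -/

import Mathlib

open scoped Classical
open Finset

/-- Weight of a vertex: sum of labels over its open neighborhood. -/
noncomputable def wsum {V : Type*} [Fintype V] (G : SimpleGraph V) (f : V → ℕ) (u : V) : ℕ :=
  ∑ v ∈ Finset.univ.filter (fun v => G.Adj u v), f v

/-- A graph is distance magic if some bijective labeling by 1,...,n has constant weights. -/
def IsDistanceMagic {V : Type*} [Fintype V] (G : SimpleGraph V) : Prop :=
  ∃ (f : V ≃ Fin (Fintype.card V)) (c : ℕ),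
    ∀ u, wsum G (fun v => (f v : ℕ) + 1) u = c

/-- `G` is `r`-regular. -/
def IsRegularDeg {V : Type*} [Fintype V] (G : SimpleGraph V) (r : ℕ) : Prop :=
  ∀ u : V, (Finset.univ.filter (fun v => G.Adj u v)).card = r

/-- `(a,d)`-distance antimagic: some bijective labeling by 1,...,n has weight set
`{a, a+d, ..., a+(n-1)d}`. -/
def IsDistAntimagic {V : Type*} [Fintype V] (G : SimpleGraph V) (a d : ℕ) : Prop :=
  ∃ f : V ≃ Fin (Fintype.card V),
    Finset.image (fun u => wsum G (fun v => (f v : ℕ) + 1) u) Finset.univ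
      = Finset.image (fun i : Fin (Fintype.card V) => a + (i : ℕ) * d) Finset.univ

/-- Circulant graph on `N` vertices with jumps `1,...,m` (so `H_{2m,N} = C_N^m`). -/
def circulant (N m : ℕ) : SimpleGraph (Fin N) :=
  SimpleGraph.fromRel (fun i j => ∃ k, 1 ≤ k ∧ k ≤ m ∧ ((i : ℕ) + k) % N = (j : ℕ))

/-- The graph `(K_{n-1} - M) + K_1`: vertex `0` joined to all, and vertices `1,...,n-1`
forming a complete graph minus the perfect matching pairing `i` with `i + (n-1)/2 (mod n-1)`. -/
def calG (n : ℕ) : SimpleGraph (Fin n) :=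
  SimpleGraph.fromRel (fun i j =>
    (i : ℕ) = 0 ∨ (j : ℕ) = 0 ∨
      ¬ (((i : ℕ) - 1 + (n - 1) / 2) % (n - 1) = (j : ℕ) - 1))

/-- Lexicographic product `G ∘ H`. -/
def lexProd {α β : Type*} (G : SimpleGraph α) (H : SimpleGraph β) : SimpleGraph (α × β) where
  Adj x y := G.Adj x.1 y.1 ∨ (x.1 = y.1 ∧ H.Adj x.2 y.2)
  symm := ⟨by
    rintro ⟨a, b⟩ ⟨c, d⟩ (h | ⟨h1, h2⟩)
    · exact Or.inl h.symm
    · exact Or.inr ⟨h1.symm, h2.symm⟩⟩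
  loopless := ⟨by
    rintro ⟨a, b⟩ (h | ⟨-, h⟩)
    · exact G.loopless.irrefl a h
    · exact H.loopless.irrefl b h⟩

/-- Direct (tensor) product `G × H`. -/
def tensorProd {α β : Type*} (G : SimpleGraph α) (H : SimpleGraph β) : SimpleGraph (α × β) where
  Adj x y := G.Adj x.1 y.1 ∧ H.Adj x.2 y.2
  symm := ⟨fun _ _ h => ⟨h.1.symm, h.2.symm⟩⟩
  loopless := ⟨fun x h => G.loopless.irrefl x.1 h.1⟩

/-- The Harary graph `H_{3,n}`. -/
noncomputable def harary3 (n : ℕ) : SimpleGraph (Fin n) :=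
  circulant n 1 ⊔ SimpleGraph.fromRel (fun i j =>
    if n % 2 = 0 then
      ∃ k, 1 ≤ k ∧ k ≤ n / 2 ∧ (i : ℕ) = k ∧ (j : ℕ) = (k + n / 2) % n
    else
      ((i : ℕ) = 0 ∧ ((j : ℕ) = (n - 1) / 2 ∨ (j : ℕ) = (n + 1) / 2)) ∨
      (∃ k, 1 ≤ k ∧ k < (n - 1) / 2 ∧ (i : ℕ) = k ∧ (j : ℕ) = (k + (n + 1) / 2) % n))

/-- The Harary graph `H_{2n+1,2n+3}`: `C_{2n+3}^n` together with edges `v_0 v_{n+1}`,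
`v_0 v_{n+2}` and `v_i v_{i+n+2}` for `1 ≤ i < n+1`. -/
def hararyOdd (n : ℕ) : SimpleGraph (Fin (2 * n + 3)) :=
  circulant (2 * n + 3) n ⊔ SimpleGraph.fromRel (fun i j =>
    ((i : ℕ) = 0 ∧ ((j : ℕ) = n + 1 ∨ (j : ℕ) = n + 2)) ∨
    (∃ k, 1 ≤ k ∧ k < n + 1 ∧ (i : ℕ) = k ∧ (j : ℕ) = k + n + 2))

/-- The Harary graph `H_{4n+1,4n+4}`: circulant with jumps `1,...,2n` and `2n+2`. -/
def harary41 (n : ℕ) : SimpleGraph (Fin (4 * n + 4)) :=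
  SimpleGraph.fromRel (fun i j =>
    ∃ k, ((1 ≤ k ∧ k ≤ 2 * n) ∨ k = 2 * n + 2) ∧ ((i : ℕ) + k) % (4 * n + 4) = (j : ℕ))

/-- The join `G + K_1`. -/
def joinK1 {V : Type*} (G : SimpleGraph V) : SimpleGraph (V ⊕ Unit) :=
  SimpleGraph.fromRel (fun x y =>
    match x, y with
    | Sum.inl a, Sum.inl b => G.Adj a b
    | Sum.inl _, Sum.inr _ => True
    | Sum.inr _, _ => False)

/-! ### Auxiliary machinery for the proof -/

section Aux

lemma mod2' (x M : ℕ) (h : x < 2*M) :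
    (x % M = x ∧ x < M) ∨ (x % M = x - M ∧ M ≤ x) := by
  rcases lt_or_ge x M with h1|h1
  · exact Or.inl ⟨Nat.mod_eq_of_lt h1, h1⟩
  · exact Or.inr ⟨by rw [Nat.mod_eq_sub_mod h1, Nat.mod_eq_of_lt (by omega)], h1⟩

lemma adj_iff' (n : ℕ) (i j : Fin (4*n+4)) :
    (harary41 n).Adj i j ↔ ((j:ℕ) ≠ (i:ℕ) ∧
      (j:ℕ) ≠ ((i:ℕ)+(2*n+1)) % (4*n+4) ∧ (j:ℕ) ≠ ((i:ℕ)+(2*n+3)) % (4*n+4)) := by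
  have hi := i.isLt
  have hj := j.isLt
  have m1 := mod2' ((i:ℕ)+(2*n+1)) (4*n+4) (by omega)
  have m2 := mod2' ((i:ℕ)+(2*n+3)) (4*n+4) (by omega)
  rw [harary41, SimpleGraph.fromRel_adj]
  constructor
  · rintro ⟨hne, h⟩
    have hne' : (j:ℕ) ≠ (i:ℕ) := fun h' => hne (Fin.ext h'.symm)
    refine ⟨hne', ?_, ?_⟩ <;>
    · rcases h with ⟨k, hk, hkeq⟩ | ⟨k, hk, hkeq⟩ <;>
      · have hk' : (1 ≤ k ∧ k ≤ 2*n) ∨ k = 2*n+2 := hk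
        have m3 := mod2' ((i:ℕ)+k) (4*n+4) (by omega)
        have m4 := mod2' ((j:ℕ)+k) (4*n+4) (by omega)
        omega
  · rintro ⟨h0, h1, h2⟩
    refine ⟨fun h' => h0 (by rw [h']), ?_⟩
    by_cases hlt : (i:ℕ) < (j:ℕ)
    · by_cases he : (j:ℕ) - (i:ℕ) ≤ 2*n ∨ (j:ℕ) - (i:ℕ) = 2*n+2
      · left
        refine ⟨(j:ℕ) - (i:ℕ), by omega, ?_⟩
        have m3 := mod2' ((i:ℕ)+((j:ℕ)-(i:ℕ))) (4*n+4) (by omega)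
        omega
      · right
        refine ⟨4*n+4 - ((j:ℕ) - (i:ℕ)), by omega, ?_⟩
        have m4 := mod2' ((j:ℕ)+(4*n+4 - ((j:ℕ) - (i:ℕ)))) (4*n+4) (by omega)
        omega
    · by_cases he : (i:ℕ) - (j:ℕ) ≤ 2*n ∨ (i:ℕ) - (j:ℕ) = 2*n+2
      · right
        refine ⟨(i:ℕ) - (j:ℕ), by omega, ?_⟩
        have m4 := mod2' ((j:ℕ)+((i:ℕ)-(j:ℕ))) (4*n+4) (by omega)
        omega
      · left
        refine ⟨4*n+4 - ((i:ℕ) - (j:ℕ)), by omega, ?_⟩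
        have m3 := mod2' ((i:ℕ)+(4*n+4 - ((i:ℕ) - (j:ℕ)))) (4*n+4) (by omega)
        omega

def o1 (n : ℕ) : Fin (4*n+4) := ⟨2*n+1, by omega⟩
def o2 (n : ℕ) : Fin (4*n+4) := ⟨2*n+3, by omega⟩

lemma val_add_o1 (n : ℕ) (u : Fin (4*n+4)) :
    ((u + o1 n : Fin (4*n+4)) : ℕ) = ((u:ℕ) + (2*n+1)) % (4*n+4) := by
  rw [Fin.val_add]; rfl

lemma val_add_o2 (n : ℕ) (u : Fin (4*n+4)) :
    ((u + o2 n : Fin (4*n+4)) : ℕ) = ((u:ℕ) + (2*n+3)) % (4*n+4) := by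
  rw [Fin.val_add]; rfl

lemma filter_eq (n : ℕ) (u : Fin (4*n+4)) :
    (Finset.univ.filter (fun v => (harary41 n).Adj u v)) =
      Finset.univ \ {u, u + o1 n, u + o2 n} := by
  ext v
  simp only [mem_filter, mem_univ, true_and, mem_sdiff, mem_insert, mem_singleton, adj_iff']
  rw [Fin.ext_iff, Fin.ext_iff, Fin.ext_iff, val_add_o1, val_add_o2]
  tauto

lemma triple_distinct (n : ℕ) (u : Fin (4*n+4)) :
    u ≠ u + o1 n ∧ u ≠ u + o2 n ∧ u + o1 n ≠ u + o2 n := by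
  have hu := u.isLt
  have m1 := mod2' ((u:ℕ)+(2*n+1)) (4*n+4) (by omega)
  have m2 := mod2' ((u:ℕ)+(2*n+3)) (4*n+4) (by omega)
  refine ⟨fun h => ?_, fun h => ?_, fun h => ?_⟩ <;>
  · rw [Fin.ext_iff] at h
    simp only [val_add_o1, val_add_o2] at h
    omega

lemma wsum_eq (n : ℕ) (ℓ : Fin (4*n+4) → ℕ) (u : Fin (4*n+4)) :
    wsum (harary41 n) ℓ u + (ℓ u + ℓ (u + o1 n) + ℓ (u + o2 n)) = ∑ v, ℓ v := by
  obtain ⟨d1, d2, d3⟩ := triple_distinct n u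
  rw [wsum, filter_eq]
  conv_rhs => rw [← Finset.sum_sdiff (Finset.subset_univ {u, u + o1 n, u + o2 n})]
  congr 1
  rw [Finset.sum_insert (by simp [d1, d2]), Finset.sum_insert (by simp [d3]),
    Finset.sum_singleton]
  ring

lemma gauss (m : ℕ) : (∑ w : Fin m, (w:ℕ)) * 2 = m * (m-1) := by
  rw [Fin.sum_univ_eq_sum_range (fun i => i) m]
  exact Finset.sum_range_id_mul_two m

lemma sum_labels (n : ℕ) (f : Fin (4*n+4) ≃ Fin (Fintype.card (Fin (4*n+4)))) :
    ∑ v, ((f v : ℕ) + 1) = 8*n^2 + 18*n + 10 := by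
  rw [Equiv.sum_comp f (fun w => (w:ℕ)+1)]
  rw [Finset.sum_add_distrib, Finset.sum_const, smul_eq_mul, mul_one]
  have h1 := gauss (Fintype.card (Fin (4*n+4)))
  have hc : Fintype.card (Fin (4*n+4)) = 4*n+4 := Fintype.card_fin _
  rw [Finset.card_univ]
  rw [hc] at h1 ⊢
  have h2 : (4*n+4) * (4*n+4-1) = 16*n^2+28*n+12 := by
    have h3 : 4*n+4-1 = 4*n+3 := by omega
    rw [h3]; ring
  obtain ⟨k, hk⟩ : ∃ k, n^2 = k := ⟨_, rfl⟩
  rw [hk] at h2 ⊢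
  omega

/-- labeling on residues -/
def M0 (n t : ℕ) : ℕ := if t % 2 = 0 then t + 1 else if t % 4 = 1 then 4*n+3 - t else 4*n+7 - t

def lab (n : ℕ) (v : Fin (4*n+4)) : ℕ := M0 n ((2*n+3) * (v:ℕ) % (4*n+4))

lemma M0_bounds (n t : ℕ) (ht : t < 4*n+4) : 1 ≤ M0 n t ∧ M0 n t ≤ 4*n+4 := by
  unfold M0; split_ifs <;> omega

lemma M0_inj (n s t : ℕ) (hs : s < 4*n+4) (ht : t < 4*n+4) (h : M0 n s = M0 n t) : s = t := by
  unfold M0 at h; split_ifs at h <;> omega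

lemma mul_mod_mod (c x N : ℕ) : c * (x % N) % N = c * x % N := by
  rw [Nat.mul_mod, Nat.mod_mod_of_dvd _ dvd_rfl, ← Nat.mul_mod]

lemma cc_mod (n a : ℕ) : (2*n+3) * ((2*n+3) * a % (4*n+4)) % (4*n+4) = a % (4*n+4) := by
  rw [mul_mod_mod]
  have h : (2*n+3) * ((2*n+3) * a) = a + ((n+2)*a) * (4*n+4) := by ring
  rw [h, Nat.add_mul_mod_self_right]

lemma tinj (n : ℕ) (a b : Fin (4*n+4))
    (h : (2*n+3) * (a:ℕ) % (4*n+4) = (2*n+3) * (b:ℕ) % (4*n+4)) : a = b := by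
  have h3 := congrArg (fun x => (2*n+3) * x % (4*n+4)) h
  simp only [cc_mod] at h3
  exact Fin.ext (by rw [← Nat.mod_eq_of_lt a.isLt, ← Nat.mod_eq_of_lt b.isLt]; exact h3)

/-- closed form of the 3-window sum -/
def Tc (n t : ℕ) : ℕ :=
  if t = 0 then 4*n+7 else if t = 4*n+3 then 4*n+8 else
  if t % 2 = 0 then 8*n+11 - t else if t % 4 = 1 then 4*n+5 + t else 4*n+9 + t

lemma Tc_bounds (n t : ℕ) (ht : t < 4*n+4) : 4*n+6 ≤ Tc n t ∧ Tc n t ≤ 8*n+9 := by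
  unfold Tc; split_ifs <;> omega

lemma Tc_inj (n s t : ℕ) (hs : s < 4*n+4) (ht : t < 4*n+4) (h : Tc n s = Tc n t) : s = t := by
  unfold Tc at h; split_ifs at h <;> omega

lemma M0_even (n t : ℕ) (h : t % 2 = 0) : M0 n t = t + 1 := by
  unfold M0; rw [if_pos h]

lemma M0_one (n t : ℕ) (h : t % 4 = 1) : M0 n t = 4*n+3 - t := by
  unfold M0; rw [if_neg (by omega), if_pos h]

lemma M0_three (n t : ℕ) (h : t % 4 = 3) : M0 n t = 4*n+7 - t := by
  unfold M0; rw [if_neg (by omega), if_neg (by omega)]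

lemma Tc_zero (n : ℕ) : Tc n 0 = 4*n+7 := by unfold Tc; rw [if_pos rfl]

lemma Tc_last (n : ℕ) : Tc n (4*n+3) = 4*n+8 := by
  unfold Tc; rw [if_neg (by omega), if_pos rfl]

lemma Tval (n t : ℕ) (ht : t < 4*n+4) :
    M0 n ((t + (4*n+3)) % (4*n+4)) + M0 n t + M0 n ((t+1) % (4*n+4)) = Tc n t := by
  by_cases ht0 : t = 0
  · subst ht0
    rw [show (0 + (4*n+3)) % (4*n+4) = 4*n+3 from by
        rw [Nat.zero_add]; exact Nat.mod_eq_of_lt (by omega),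
      show (0 + 1) % (4*n+4) = 1 from Nat.mod_eq_of_lt (by omega),
      M0_three n (4*n+3) (by omega), M0_even n 0 (by omega), M0_one n 1 (by omega), Tc_zero]
    omega
  by_cases ht1 : t = 4*n+3
  · subst ht1
    rw [show (4*n+3 + (4*n+3)) % (4*n+4) = 4*n+2 from by
        rw [Nat.mod_eq_sub_mod (by omega), show 4*n+3+(4*n+3) - (4*n+4) = 4*n+2 from by omega]
        exact Nat.mod_eq_of_lt (by omega),
      show (4*n+3 + 1) % (4*n+4) = 0 from by
        rw [Nat.mod_eq_sub_mod (by omega), show 4*n+3+1 - (4*n+4) = 0 from by omega]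
        exact Nat.zero_mod _,
      M0_even n (4*n+2) (by omega), M0_three n (4*n+3) (by omega), M0_even n 0 (by omega),
      Tc_last]
    omega
  · have e1 : (t + (4*n+3)) % (4*n+4) = t - 1 := by
      rw [Nat.mod_eq_sub_mod (by omega), show t + (4*n+3) - (4*n+4) = t - 1 from by omega]
      exact Nat.mod_eq_of_lt (by omega)
    have e2 : (t + 1) % (4*n+4) = t + 1 := Nat.mod_eq_of_lt (by omega)
    rw [e1, e2]
    have h4 : t % 4 = 0 ∨ t % 4 = 1 ∨ t % 4 = 2 ∨ t % 4 = 3 := by omega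
    rcases h4 with h4 | h4 | h4 | h4
    · rw [M0_three n (t-1) (by omega), M0_even n t (by omega), M0_one n (t+1) (by omega)]
      unfold Tc; split_ifs <;> omega
    · rw [M0_even n (t-1) (by omega), M0_one n t (by omega), M0_even n (t+1) (by omega)]
      unfold Tc; split_ifs <;> omega
    · rw [M0_one n (t-1) (by omega), M0_even n t (by omega), M0_three n (t+1) (by omega)]
      unfold Tc; split_ifs <;> omega
    · rw [M0_even n (t-1) (by omega), M0_three n t (by omega), M0_even n (t+1) (by omega)]
      unfold Tc; split_ifs <;> omega

noncomputable def fEx (n : ℕ) : Fin (4*n+4) ≃ Fin (4*n+4) :=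
  Equiv.ofBijective (fun v => (⟨lab n v - 1, by
    have h := M0_bounds n ((2*n+3) * (v:ℕ) % (4*n+4)) (Nat.mod_lt _ (by omega))
    unfold lab; omega⟩ : Fin (4*n+4)))
  (by
    rw [Fintype.bijective_iff_injective_and_card]
    refine ⟨fun a b hab => ?_, rfl⟩
    have ha := M0_bounds n ((2*n+3) * (a:ℕ) % (4*n+4)) (Nat.mod_lt _ (by omega))
    have hb := M0_bounds n ((2*n+3) * (b:ℕ) % (4*n+4)) (Nat.mod_lt _ (by omega))
    rw [Fin.mk.injEq] at hab
    have h1 : lab n a = lab n b := by unfold lab at *; omega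
    exact tinj n a b (M0_inj n _ _ (Nat.mod_lt _ (by omega)) (Nat.mod_lt _ (by omega)) h1))

lemma fEx_val (n : ℕ) (v : Fin (4*n+4)) : ((fEx n v : ℕ)) + 1 = lab n v := by
  have h := M0_bounds n ((2*n+3) * (v:ℕ) % (4*n+4)) (Nat.mod_lt _ (by omega))
  simp only [fEx, Equiv.ofBijective_apply]
  unfold lab at *
  omega

noncomputable def fMain (n : ℕ) : Fin (4*n+4) ≃ Fin (Fintype.card (Fin (4*n+4))) :=
  (fEx n).trans (finCongr (Fintype.card_fin (4*n+4)).symm)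

lemma fMain_val (n : ℕ) (v : Fin (4*n+4)) : ((fMain n v : ℕ)) + 1 = lab n v := by
  rw [← fEx_val n v]
  simp [fMain]

lemma lab_o1 (n : ℕ) (u : Fin (4*n+4)) :
    lab n (u + o1 n) = M0 n (((2*n+3) * (u:ℕ) % (4*n+4) + (4*n+3)) % (4*n+4)) := by
  unfold lab
  congr 1
  rw [val_add_o1, mul_mod_mod, Nat.mul_add,
    show (2*n+3)*(2*n+1) = (4*n+3) + n*(4*n+4) from by ring, ← Nat.add_assoc,
    Nat.add_mul_mod_self_right]
  conv_lhs => rw [Nat.add_mod]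
  conv_rhs => rw [Nat.add_mod]
  rw [Nat.mod_mod_of_dvd _ dvd_rfl]

lemma lab_o2 (n : ℕ) (u : Fin (4*n+4)) :
    lab n (u + o2 n) = M0 n (((2*n+3) * (u:ℕ) % (4*n+4) + 1) % (4*n+4)) := by
  unfold lab
  congr 1
  rw [val_add_o2, mul_mod_mod, Nat.mul_add,
    show (2*n+3)*(2*n+3) = 1 + (n+2)*(4*n+4) from by ring, ← Nat.add_assoc,
    Nat.add_mul_mod_self_right]
  conv_lhs => rw [Nat.add_mod]
  conv_rhs => rw [Nat.add_mod]
  rw [Nat.mod_mod_of_dvd _ dvd_rfl]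

lemma wlab (n : ℕ) (u : Fin (4*n+4)) :
    wsum (harary41 n) (lab n) u + Tc n ((2*n+3) * (u:ℕ) % (4*n+4)) = 8*n^2 + 18*n + 10 := by
  have key := wsum_eq n (lab n) u
  have hsum : ∑ v, lab n v = 8*n^2 + 18*n + 10 := by
    rw [show (lab n) = (fun v => ((fMain n v : ℕ) + 1)) from funext (fun v => (fMain_val n v).symm)]
    exact sum_labels n (fMain n)
  rw [hsum] at key
  rw [lab_o1, lab_o2] at key
  have hT := Tval n ((2*n+3) * (u:ℕ) % (4*n+4)) (Nat.mod_lt _ (by omega))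
  have hlabu : lab n u = M0 n ((2*n+3) * (u:ℕ) % (4*n+4)) := rfl
  rw [hlabu] at key
  omega

lemma harary41_antimagic_exists (n : ℕ) :
    IsDistAntimagic (harary41 n) (8 * n ^ 2 + 10 * n + 1) 1 := by
  refine ⟨fMain n, ?_⟩
  rw [show (fun v => ((fMain n v : ℕ) + 1)) = lab n from funext (fMain_val n)]
  have hWinj : Function.Injective (wsum (harary41 n) (lab n)) := by
    intro u v h
    have h1 := wlab n u
    have h2 := wlab n v
    refine tinj n u v (Tc_inj n _ _ (Nat.mod_lt _ (by omega)) (Nat.mod_lt _ (by omega)) ?_)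
    omega
  have hRinj : Function.Injective
      (fun i : Fin (Fintype.card (Fin (4*n+4))) => 8 * n ^ 2 + 10 * n + 1 + (i:ℕ) * 1) := by
    intro i j h
    simp only [mul_one, Nat.add_left_cancel_iff] at h
    exact Fin.ext h
  apply Finset.eq_of_subset_of_card_le
  · intro x hx
    simp only [Finset.mem_image, Finset.mem_univ, true_and] at hx ⊢
    obtain ⟨u, hu⟩ := hx
    have h1 := wlab n u
    have h2 := Tc_bounds n ((2*n+3) * (u:ℕ) % (4*n+4)) (Nat.mod_lt _ (by omega))
    obtain ⟨k, hk⟩ : ∃ k, n^2 = k := ⟨_, rfl⟩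
    rw [hk] at h1
    refine ⟨⟨x - (8 * n ^ 2 + 10 * n + 1), by rw [Fintype.card_fin, hk]; omega⟩, ?_⟩
    simp only [mul_one]
    rw [hk]
    omega
  · rw [Finset.card_image_of_injective _ hRinj, Finset.card_image_of_injective _ hWinj]
    simp

end Aux

/-- H_{4n+1,4n+4} is (a,d)-distance antimagic iff d = 1, with
a = 8n^2+10n+1. -/
theorem harary41_antimagic_iff (n : ℕ) :
    (∀ d : ℕ, (∃ a, IsDistAntimagic (harary41 n) a d) ↔ d = 1) ∧
    IsDistAntimagic (harary41 n) (8 * n ^ 2 + 10 * n + 1) 1 := by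
  refine ⟨fun d => ⟨?_, fun hd => hd ▸ ⟨8 * n ^ 2 + 10 * n + 1, harary41_antimagic_exists n⟩⟩,
    harary41_antimagic_exists n⟩
  rintro ⟨a, f, himg⟩
  set ℓ : Fin (4*n+4) → ℕ := fun v => (f v : ℕ) + 1 with hℓ
  set W : Fin (4*n+4) → ℕ := wsum (harary41 n) ℓ with hW
  have key : ∀ u, W u + (ℓ u + ℓ (u + o1 n) + ℓ (u + o2 n)) = 8*n^2 + 18*n + 10 := by
    intro u
    rw [hW, wsum_eq n ℓ u, hℓ]
    exact sum_labels n f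
  have hbounds : ∀ v, 1 ≤ ℓ v ∧ ℓ v ≤ 4*n+4 := by
    intro v
    have hv : (f v : ℕ) < 4*n+4 := by simpa using (f v).isLt
    simp only [hℓ]
    omega
  have hinj : Function.Injective ℓ := by
    intro x y h
    simp only [hℓ] at h
    exact f.injective (Fin.ext (by omega))
  have tri : ∀ u, 6 ≤ ℓ u + ℓ (u + o1 n) + ℓ (u + o2 n) ∧
      ℓ u + ℓ (u + o1 n) + ℓ (u + o2 n) ≤ 12*n+9 := by
    intro u
    obtain ⟨d1, d2, d3⟩ := triple_distinct n u
    have n1 : ℓ u ≠ ℓ (u + o1 n) := fun h => d1 (hinj h)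
    have n2 : ℓ u ≠ ℓ (u + o2 n) := fun h => d2 (hinj h)
    have n3 : ℓ (u + o1 n) ≠ ℓ (u + o2 n) := fun h => d3 (hinj h)
    have b1 := hbounds u
    have b2 := hbounds (u + o1 n)
    have b3 := hbounds (u + o2 n)
    omega
  -- sum of all weights
  have hSW : (∑ u, W u) + 3 * (8*n^2 + 18*n + 10) = (4*n+4) * (8*n^2 + 18*n + 10) := by
    have e0 : ∑ u, (W u + (ℓ u + ℓ (u + o1 n) + ℓ (u + o2 n)))
        = (4*n+4) * (8*n^2 + 18*n + 10) := by
      rw [Finset.sum_congr rfl (fun u _ => key u), Finset.sum_const, Finset.card_univ,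
        Fintype.card_fin, smul_eq_mul]
    have e1 : ∑ u, ℓ (u + o1 n) = ∑ v, ℓ v := by
      have := Equiv.sum_comp (Equiv.addRight (o1 n)) ℓ
      simpa using this
    have e2 : ∑ u, ℓ (u + o2 n) = ∑ v, ℓ v := by
      have := Equiv.sum_comp (Equiv.addRight (o2 n)) ℓ
      simpa using this
    have e3 : ∑ v, ℓ v = 8*n^2 + 18*n + 10 := by rw [hℓ]; exact sum_labels n f
    rw [Finset.sum_add_distrib, Finset.sum_add_distrib, Finset.sum_add_distrib, e1, e2, e3] at e0
    omega
  -- a is a weight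
  have hcard : 0 < Fintype.card (Fin (4*n+4)) := by simp
  have hmem0 : ∃ u, W u = a := by
    have h1 : a + ((⟨0, hcard⟩ : Fin (Fintype.card (Fin (4*n+4)))) : ℕ) * d ∈
        Finset.image (fun i : Fin (Fintype.card (Fin (4*n+4))) => a + (i:ℕ) * d) Finset.univ :=
      Finset.mem_image_of_mem _ (Finset.mem_univ _)
    rw [← himg] at h1
    simp only [Finset.mem_image, Finset.mem_univ, true_and] at h1
    obtain ⟨u, hu⟩ := h1
    exact ⟨u, by simpa using hu⟩
  have hmem1 : ∃ u, W u = a + (4*n+3) * d := by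
    have hlt : (4*n+3) < Fintype.card (Fin (4*n+4)) := by simp
    have h1 : a + ((⟨4*n+3, hlt⟩ : Fin (Fintype.card (Fin (4*n+4)))) : ℕ) * d ∈
        Finset.image (fun i : Fin (Fintype.card (Fin (4*n+4))) => a + (i:ℕ) * d) Finset.univ :=
      Finset.mem_image_of_mem _ (Finset.mem_univ _)
    rw [← himg] at h1
    simp only [Finset.mem_image, Finset.mem_univ, true_and] at h1
    obtain ⟨u, hu⟩ := h1
    exact ⟨u, by simpa using hu⟩
  obtain ⟨k, hk⟩ : ∃ k, n^2 = k := ⟨_, rfl⟩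
  obtain ⟨u0, hu0⟩ := hmem0
  obtain ⟨u1, hu1⟩ := hmem1
  have hb0 : a + 6 ≤ 8*k + 18*n + 10 ∧ 8*k + 18*n + 10 ≤ a + 12*n + 9 := by
    have := key u0
    have := tri u0
    rw [hu0] at *
    omega
  have hXle : (4*n+3) * d ≤ 12*n + 3 := by
    have := key u1
    have := tri u1
    rw [hu1] at *
    omega
  by_cases hd0 : d = 0
  · exfalso
    subst hd0
    have hall : ∀ u, W u = a := by
      intro u
      have h1 : W u ∈ Finset.image W Finset.univ := Finset.mem_image_of_mem _ (Finset.mem_univ _)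
      rw [himg] at h1
      simp only [Finset.mem_image, Finset.mem_univ, true_and, Nat.mul_zero, Nat.add_zero] at h1
      obtain ⟨i, hi⟩ := h1
      omega
    have hsum : ∑ u, W u = (4*n+4) * a := by
      rw [Finset.sum_congr rfl (fun u _ => hall u), Finset.sum_const, Finset.card_univ,
        Fintype.card_fin, smul_eq_mul]
    rw [hsum] at hSW
    have e1 : (2*n+2) * (2*a + 12*n + 15) = (2*n+2) * (16*n^2 + 36*n + 20) := by
      have r1 : (2*n+2) * (2*a + 12*n + 15) = (4*n+4) * a + 3 * (8*n^2 + 18*n + 10) := by ring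
      have r2 : (2*n+2) * (16*n^2 + 36*n + 20) = (4*n+4) * (8*n^2 + 18*n + 10) := by ring
      rw [r1, r2, hSW]
    have e2 := Nat.eq_of_mul_eq_mul_left (show 0 < 2*n+2 by omega) e1
    rw [hk] at e2
    omega
  · -- d ≥ 1 : weights are distinct, compute the total sum
    have hRinj : Function.Injective
        (fun i : Fin (Fintype.card (Fin (4*n+4))) => a + (i:ℕ) * d) := by
      intro i j h
      simp only [] at h
      have : (i:ℕ) * d = (j:ℕ) * d := by omega
      exact Fin.ext (Nat.eq_of_mul_eq_mul_right (by omega) this)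
    have hcardW : (Finset.image W Finset.univ).card = (Finset.univ : Finset (Fin (4*n+4))).card := by
      rw [himg, Finset.card_image_of_injective _ hRinj]
      simp
    have hWinj0 := Finset.injOn_of_card_image_eq hcardW
    have hWinj : Function.Injective W := fun x y h =>
      hWinj0 (by simp) (by simp) h
    have hsumW : ∑ u, W u = ∑ x ∈ Finset.image W Finset.univ, x := by
      rw [Finset.sum_image (fun x _ y _ h => hWinj h)]
    have hsumR : ∑ x ∈ Finset.image
          (fun i : Fin (Fintype.card (Fin (4*n+4))) => a + (i:ℕ) * d) Finset.univ, x
        = (4*n+4) * a + (8*n^2 + 14*n + 6) * d := by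
      rw [Finset.sum_image (fun x _ y _ h => hRinj h)]
      rw [Finset.sum_add_distrib, Finset.sum_const, Finset.card_univ, smul_eq_mul,
        ← Finset.sum_mul]
      rw [Fin.sum_univ_eq_sum_range (fun i => i) (Fintype.card (Fin (4*n+4))), Fintype.card_fin,
        Fintype.card_fin]
      have hg := Finset.sum_range_id_mul_two (4*n+4)
      have r1 : (4*n+4) * (4*n+4-1) = 16*k + 28*n + 12 := by
        rw [← hk, show 4*n+4-1 = 4*n+3 from by omega]; ring
      have r2 : ∑ i ∈ Finset.range (4*n+4), i = 8*k + 14*n + 6 := by omega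
      rw [r2, hk]
    rw [hsumW, himg, hsumR] at hSW
    have e1 : (2*n+2) * (2*a + (4*n+3) * d + 12*n + 15)
        = (2*n+2) * (16*n^2 + 36*n + 20) := by
      have r1 : (2*n+2) * (2*a + (4*n+3) * d + 12*n + 15)
          = (4*n+4) * a + (8*n^2 + 14*n + 6) * d + 3 * (8*n^2 + 18*n + 10) := by ring
      have r2 : (2*n+2) * (16*n^2 + 36*n + 20) = (4*n+4) * (8*n^2 + 18*n + 10) := by ring
      rw [r1, r2, ← hSW]
    have e2 := Nat.eq_of_mul_eq_mul_left (show 0 < 2*n+2 by omega) e1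
    rw [hk] at e2
    -- 2a + (4n+3)d = 16k + 24n + 5, with (4n+3)d ≤ 12n+3 and d ≠ 0
    have hdle : d ≤ 2 := by
      by_contra hcon
      push_neg at hcon
      have h3 := Nat.mul_le_mul_left (4*n+3) (show 3 ≤ d from by omega)
      omega
    interval_cases d
    · exact absurd rfl hd0
    · rfl
    · exfalso
      omega
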